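/- Let Φ : M_n → M_n be a Hermiticity-preserving linear map and let 1 ≤ k ≤ n. Then the following are equivalent: (i) for every m ≥ 1 and every positive semidefinite ρ ∈ M_m ⊗ M_n, the matrix (id_m ⊗ Φ)(ρ) is k-block positive; (ii) Φ is k-positive. (This is Corollary 4.4(d): Φ : M_n → OMIN^k(M_n) is completely positive if and only if Φ is k-positive.) -/

import Mathlib

open scoped ComplexOrder Kronecker
open Matrix

noncomputable section

/-- The standard inner product `⟨v, w⟩ = ∑ conj(vᵢ) wᵢ` on `I → ℂ`. -/
def inprod {I : Type*} [Fintype I] (v w : I → ℂ) : ℂ :=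
  ∑ i, (starRingEnd ℂ) (v i) * w i

/-- `v` is a unit vector. -/
def UnitVec {I : Type*} [Fintype I] (v : I → ℂ) : Prop :=
  inprod v v = 1

/-- The Schmidt rank of a vector in `ℂ^I ⊗ ℂ^J`, i.e. the rank of the associated
`I × J` coefficient matrix. -/
noncomputable def SchmidtRank {I J : Type*} [Fintype I] [Fintype J] (v : I × J → ℂ) : ℕ :=
  (Matrix.of fun i j => v (i, j)).rank

/-- The operator norm (largest singular value) of a matrix, as
`sup { |⟨v, A w⟩| : v, w unit vectors }`. -/
noncomputable def opNorm {I J : Type*} [Fintype I] [Fintype J] (A : Matrix I J ℂ) : ℝ :=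
  sSup { t : ℝ | ∃ v w, UnitVec v ∧ UnitVec w ∧ t = ‖inprod v (A.mulVec w)‖ }

/-- The `S(k)`-norm of `X ∈ M_I ⊗ M_J`. -/
noncomputable def SNorm {I J : Type*} [Fintype I] [Fintype J] (k : ℕ)
    (X : Matrix (I × J) (I × J) ℂ) : ℝ :=
  sSup { t : ℝ | ∃ v w : I × J → ℂ, UnitVec v ∧ UnitVec w ∧
    SchmidtRank v ≤ k ∧ SchmidtRank w ≤ k ∧
    t = ‖inprod v (X.mulVec w)‖ }

/-- `X` is a `k`-block positive (Hermitian) operator: `⟨v, X v⟩ ≥ 0` for every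
vector of Schmidt rank at most `k`. -/
def kBlockPos {I J : Type*} [Fintype I] [Fintype J] (k : ℕ)
    (X : Matrix (I × J) (I × J) ℂ) : Prop :=
  X.IsHermitian ∧ ∀ v : I × J → ℂ, SchmidtRank v ≤ k → 0 ≤ inprod v (X.mulVec v)

/-- `ρ` has Schmidt number at most `k` (in particular it is positive semidefinite):
it is a finite nonnegative combination of rank-one projections onto vectors of
Schmidt rank at most `k`. -/
def SchmidtNumberLE {I J : Type*} [Fintype I] [Fintype J] (k : ℕ)
    (ρ : Matrix (I × J) (I × J) ℂ) : Prop :=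
  ∃ (N : ℕ) (c : Fin N → ℝ) (v : Fin N → (I × J → ℂ)),
    (∀ i, 0 ≤ c i) ∧ (∀ i, SchmidtRank (v i) ≤ k) ∧
    ρ = ∑ i, (c i : ℂ) • Matrix.vecMulVec (v i) (star (v i))

/-- `id_I ⊗ Φ` : the map applying `Φ` to the second tensor factor. -/
noncomputable def tensorId {I : Type*} [Fintype I] {a b : ℕ}
    (Φ : Matrix (Fin a) (Fin a) ℂ →ₗ[ℂ] Matrix (Fin b) (Fin b) ℂ)
    (X : Matrix (I × Fin a) (I × Fin a) ℂ) : Matrix (I × Fin b) (I × Fin b) ℂ :=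
  Matrix.of fun p q => Φ (Matrix.of fun s t => X (p.1, s) (q.1, t)) p.2 q.2

/-- The trace norm `‖X‖_tr = Tr √(X^* X)`. -/
noncomputable def trNorm {I : Type*} [Fintype I] [DecidableEq I] (X : Matrix I I ℂ) : ℝ :=
  (((Matrix.posSemidef_conjTranspose_mul_self X).1.eigenvectorUnitary : Matrix I I ℂ) *
    diagonal ((fun x : ℝ => (x : ℂ)) ∘ (√·) ∘ (Matrix.posSemidef_conjTranspose_mul_self X).1.eigenvalues) *
    (star (Matrix.posSemidef_conjTranspose_mul_self X).1.eigenvectorUnitary : Matrix I I ℂ)).trace.re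


end

lemma inprod_eq {I : Type*} [Fintype I] (v w : I → ℂ) : inprod v w = star v ⬝ᵥ w := rfl

lemma exists_factor {m n k : ℕ} (V : Matrix (Fin m) (Fin n) ℂ) (h : V.rank ≤ k) :
    ∃ (A : Matrix (Fin m) (Fin k) ℂ) (B : Matrix (Fin k) (Fin n) ℂ), V = A * B := by
  classical
  set S := LinearMap.range V.mulVecLin with hS
  have hr : Module.finrank ℂ S = V.rank := rfl
  set r := V.rank with hrdef
  let b : Module.Basis (Fin r) ℂ S := (Module.finBasis ℂ S).reindex (finCongr hr)
  let A' : Matrix (Fin m) (Fin r) ℂ := Matrix.of fun i β => ((b β : Fin m → ℂ) i)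
  have hcol : ∀ j : Fin n, Vᵀ j ∈ S := fun j =>
    ⟨Pi.single j 1, by ext i; simp [mulVecLin_apply, transpose_apply]⟩
  let B' : Matrix (Fin r) (Fin n) ℂ := Matrix.of fun β j => b.repr ⟨Vᵀ j, hcol j⟩ β
  have hfact : V = A' * B' := by
    ext i j
    have := b.sum_repr ⟨Vᵀ j, hcol j⟩
    have h2 := congrArg (fun x : S => (x : Fin m → ℂ) i) this
    simp only [Submodule.coe_sum, Submodule.coe_smul, Finset.sum_apply, Pi.smul_apply,
      smul_eq_mul] at h2
    rw [mul_apply]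
    simp only [A', B', Matrix.of_apply]
    rw [show V i j = Vᵀ j i from rfl, ← h2]
    exact (Finset.sum_congr rfl fun β _ => mul_comm _ _).symm
  let E : Matrix (Fin r) (Fin k) ℂ := Matrix.of fun β α => if α = Fin.castLE h β then 1 else 0
  have hE : E * Eᵀ = 1 := by
    ext β γ
    simp only [mul_apply, E, transpose_apply, Matrix.of_apply, ite_mul, one_mul, zero_mul]
    rw [Finset.sum_ite_eq' Finset.univ (Fin.castLE h β)]
    simp [Fin.castLE_inj, one_apply, eq_comm]
  refine ⟨A' * E, Eᵀ * B', ?_⟩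
  rw [hfact, Matrix.mul_assoc, ← Matrix.mul_assoc E, hE, Matrix.one_mul]

/-- `A ⊗ 1` as a matrix on product index types. -/
noncomputable def kronOne {m k n : ℕ} (A : Matrix (Fin m) (Fin k) ℂ) :
    Matrix (Fin m × Fin n) (Fin k × Fin n) ℂ :=
  Matrix.of fun p q => A p.1 q.1 * (if p.2 = q.2 then 1 else 0)

lemma kronOne_mulVec {m k n : ℕ} (A : Matrix (Fin m) (Fin k) ℂ) (B : Matrix (Fin k) (Fin n) ℂ) :
    (kronOne (n := n) A) *ᵥ (fun q => B q.1 q.2) = fun p => (A * B) p.1 p.2 := by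
  ext ⟨i, j⟩
  simp [kronOne, mulVec, dotProduct, Fintype.sum_prod_type, mul_ite, mul_assoc,
    Finset.sum_ite_eq', mul_apply]

lemma compress_apply {m k n : ℕ} (A : Matrix (Fin m) (Fin k) ℂ)
    (ρ : Matrix (Fin m × Fin n) (Fin m × Fin n) ℂ) (α β : Fin k) (s t : Fin n) :
    ((kronOne (n := n) A)ᴴ * ρ * (kronOne (n := n) A)) (α, s) (β, t)
      = ∑ i, ∑ i', (starRingEnd ℂ) (A i α) * A i' β * ρ (i, s) (i', t) := by
  simp only [mul_apply, conjTranspose_apply, kronOne, Matrix.of_apply, Fintype.sum_prod_type]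
  simp only [star_mul', apply_ite (star : ℂ → ℂ), star_one, star_zero, mul_ite, mul_zero,
    mul_one, ite_mul, zero_mul, one_mul, Finset.sum_ite_eq', Finset.sum_ite_eq,
    Finset.mem_univ, if_true]
  rw [Finset.sum_comm]
  refine Finset.sum_congr rfl fun i' _ => ?_
  rw [Finset.sum_mul]
  refine Finset.sum_congr rfl fun i _ => ?_
  simp only [starRingEnd_apply]
  ring

lemma tensorId_compress {m k n : ℕ}
    (Φ : Matrix (Fin n) (Fin n) ℂ →ₗ[ℂ] Matrix (Fin n) (Fin n) ℂ)
    (A : Matrix (Fin m) (Fin k) ℂ) (ρ : Matrix (Fin m × Fin n) (Fin m × Fin n) ℂ) :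
    tensorId Φ ((kronOne (n := n) A)ᴴ * ρ * (kronOne (n := n) A))
      = (kronOne (n := n) A)ᴴ * (tensorId Φ ρ) * (kronOne (n := n) A) := by
  ext ⟨α, j⟩ ⟨β, j'⟩
  have hmat : (Matrix.of fun s t => ((kronOne (n := n) A)ᴴ * ρ * (kronOne (n := n) A)) ((α, s)) ((β, t)))
      = ∑ i : Fin m, ∑ i' : Fin m,
          ((starRingEnd ℂ) (A i α) * A i' β) • (Matrix.of fun s t => ρ (i, s) (i', t)) := by
    ext s t
    simp only [Matrix.of_apply, compress_apply, Matrix.sum_apply, Matrix.smul_apply,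
      smul_eq_mul]
  show Φ _ j j' = _
  rw [hmat, map_sum]
  simp only [map_sum, _root_.map_smul, Matrix.sum_apply, Matrix.smul_apply, smul_eq_mul]
  -- RHS
  have : ((kronOne (n := n) A)ᴴ * (tensorId Φ ρ) * (kronOne (n := n) A)) (α, j) (β, j')
      = ∑ i, ∑ i', (starRingEnd ℂ) (A i α) * A i' β *
          (Φ (Matrix.of fun s t => ρ (i, s) (i', t)) j j') := by
    simp only [mul_apply, conjTranspose_apply, kronOne, Matrix.of_apply, Fintype.sum_prod_type,
      tensorId]
    simp only [star_mul', apply_ite (star : ℂ → ℂ), star_one, star_zero, mul_ite, mul_zero,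
      mul_one, ite_mul, zero_mul, one_mul, Finset.sum_ite_eq', Finset.sum_ite_eq,
      Finset.mem_univ, if_true]
    rw [Finset.sum_comm]
    refine Finset.sum_congr rfl fun i' _ => ?_
    rw [Finset.sum_mul]
    refine Finset.sum_congr rfl fun i _ => ?_
    simp only [starRingEnd_apply]
    ring
  rw [this]

lemma tensorId_isHermitian {m n : ℕ}
    (Φ : Matrix (Fin n) (Fin n) ℂ →ₗ[ℂ] Matrix (Fin n) (Fin n) ℂ)
    (hΦ : ∀ X, Φ Xᴴ = (Φ X)ᴴ)
    (ρ : Matrix (Fin m × Fin n) (Fin m × Fin n) ℂ) (hρ : ρ.IsHermitian) :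
    (tensorId Φ ρ).IsHermitian := by
  show _ᴴ = _
  ext ⟨p1, p2⟩ ⟨q1, q2⟩
  show star (Φ (Matrix.of fun s t => ρ (q1, s) (p1, t)) q2 p2)
      = Φ (Matrix.of fun s t => ρ (p1, s) (q1, t)) p2 q2
  have : (Matrix.of fun s t => ρ (p1, s) (q1, t))
      = (Matrix.of fun s t => ρ (q1, s) (p1, t))ᴴ := by
    ext s t
    show ρ (p1, s) (q1, t) = star (ρ (q1, t) (p1, s))
    rw [← hρ.apply]
  rw [this, hΦ]
  rfl

/-- Corollary 4.4(d): `Φ : M_n → OMIN^k(M_n)` is completely positive iff `Φ` is `k`-positive. -/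
theorem cp_into_kSuperMinimal_iff_kPositive (n k : ℕ) (hk : 1 ≤ k) (hkn : k ≤ n)
    (Φ : Matrix (Fin n) (Fin n) ℂ →ₗ[ℂ] Matrix (Fin n) (Fin n) ℂ)
    (hΦ : ∀ X, Φ Xᴴ = (Φ X)ᴴ) :
    (∀ (m : ℕ), 0 < m → ∀ ρ : Matrix (Fin m × Fin n) (Fin m × Fin n) ℂ,
        ρ.PosSemidef → kBlockPos k (tensorId Φ ρ))
      ↔ (∀ X : Matrix (Fin k × Fin n) (Fin k × Fin n) ℂ,
          X.PosSemidef → (tensorId Φ X).PosSemidef) := by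
  constructor
  · intro H X hX
    obtain ⟨hherm, hpos⟩ := H k hk X hX
    refine PosSemidef.of_dotProduct_mulVec_nonneg hherm fun x => ?_
    have hsr : SchmidtRank x ≤ k := by
      calc SchmidtRank x ≤ Fintype.card (Fin k) := Matrix.rank_le_card_height _
        _ = k := Fintype.card_fin k
    have := hpos x hsr
    rwa [inprod_eq] at this
  · intro H m _ ρ hρ
    refine ⟨tensorId_isHermitian Φ hΦ ρ hρ.1, fun v hv => ?_⟩
    obtain ⟨A, B, hAB⟩ := exists_factor (Matrix.of fun i j => v (i, j)) hv
    set w : Fin k × Fin n → ℂ := fun q => B q.1 q.2 with hw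
    have hv' : v = (kronOne (n := n) A) *ᵥ w := by
      ext ⟨i, j⟩
      rw [kronOne_mulVec]
      have := congrFun (congrFun hAB i) j
      simpa using this
    have hσ : ((kronOne (n := n) A)ᴴ * ρ * (kronOne (n := n) A)).PosSemidef :=
      hρ.conjTranspose_mul_mul_same _
    have hps := H _ hσ
    rw [tensorId_compress] at hps
    have := hps.dotProduct_mulVec_nonneg w
    rw [inprod_eq, hv']
    simpa only [star_mulVec, dotProduct_mulVec, vecMul_vecMul, Matrix.mul_assoc] using this
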